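/- A ring R is a CSNC ring (i.e., every clean element of R is strongly nil-clean) if and only if for every clean element a of R, the element a - a^2 is nilpotent. -/

import Mathlib

/-- An element `a` of a ring is *clean* if `a = e + u` for some idempotent `e` and unit `u`. -/
def IsCleanElem {R : Type*} [Ring R] (a : R) : Prop :=
  ∃ e u : R, IsIdempotentElem e ∧ IsUnit u ∧ a = e + u

/-- An element `a` of a ring is *strongly nil-clean* if `a = e + q` for some idempotent `e`
and nilpotent `q` with `e * q = q * e`. -/
def IsStronglyNilCleanElem {R : Type*} [Ring R] (a : R) : Prop :=
  ∃ e q : R, IsIdempotentElem e ∧ IsNilpotent q ∧ e * q = q * e ∧ a = e + q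

/-- A ring is a *CSNC ring* if every clean element is strongly nil-clean. -/
def IsCSNCRing (R : Type*) [Ring R] : Prop :=
  ∀ a : R, IsCleanElem a → IsStronglyNilCleanElem a

/-- If `a - a ^ 2` is nilpotent, then `a` is strongly nil-clean. -/
theorem isStronglyNilCleanElem_of_isNilpotent_sub_sq {R : Type*} [Ring R] (a : R)
    (h : IsNilpotent (a - a ^ 2)) : IsStronglyNilCleanElem a := by
  obtain ⟨m, hm⟩ := h
  set n := m + 1 with hn
  have hx : (a - a ^ 2) ^ n = 0 := by rw [hn, pow_succ', hm, mul_zero]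
  set e : R := 1 - (1 - a ^ n) ^ n with he
  have hee : IsIdempotentElem e := isIdempotentElem_one_sub_one_sub_pow_pow a n hx
  have hcomm : Commute a e := by
    have h1 : Commute a (a ^ n) := Commute.pow_right rfl n
    exact (Commute.one_right a).sub_right (((Commute.one_right a).sub_right h1).pow_right n)
  have key : IsNilpotent (a - e) := by
    set P : Polynomial ℤ := 1 - (1 - .X ^ n) ^ n with hP
    have H₁ : (Polynomial.X : Polynomial ℤ) ^ n ∣ P := by
      have := sub_dvd_pow_sub_pow 1 ((1 : Polynomial ℤ) - Polynomial.X ^ n) n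
      rwa [sub_sub_cancel, one_pow] at this
    have hne : n ≠ 0 := Nat.succ_ne_zero m
    have hX : (Polynomial.X : Polynomial ℤ) ∣ Polynomial.X - P :=
      dvd_sub dvd_rfl ((dvd_pow_self _ hne).trans H₁)
    have h1X : (1 - Polynomial.X : Polynomial ℤ) ∣ Polynomial.X - P := by
      have d1 : (1 - Polynomial.X : Polynomial ℤ) ∣ 1 - Polynomial.X ^ n := by
        simpa using sub_dvd_pow_sub_pow (1 : Polynomial ℤ) Polynomial.X n
      have h1P : (1 - Polynomial.X ^ n : Polynomial ℤ) ^ n = 1 - P := by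
        rw [hP, sub_sub_cancel]
      have heq : (Polynomial.X : Polynomial ℤ) - P
          = (1 - Polynomial.X ^ n) ^ n - (1 - Polynomial.X) := by
        rw [h1P]; ring
      rw [heq]
      exact dvd_sub (d1.trans (dvd_pow_self _ hne)) dvd_rfl
    have hsq : (Polynomial.X - Polynomial.X ^ 2 : Polynomial ℤ) ∣ (Polynomial.X - P) ^ 2 := by
      have h2 := mul_dvd_mul hX h1X
      rw [mul_one_sub, ← sq, ← sq] at h2
      exact h2
    have H₃ : ((Polynomial.X : Polynomial ℤ) - Polynomial.X ^ 2) ^ n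
        ∣ (Polynomial.X - P) ^ (2 * n) := by
      rw [pow_mul]
      exact pow_dvd_pow_of_dvd hsq n
    have hmap := map_dvd (Polynomial.aeval a) H₃
    simp only [map_pow, map_sub, Polynomial.aeval_X, map_one, hP] at hmap
    rw [hx, zero_dvd_iff] at hmap
    exact ⟨2 * n, hmap⟩
  refine ⟨e, a - e, hee, key, ?_, by abel⟩
  exact (hcomm.symm.sub_right (Commute.refl e)).eq

theorem stmt_0 (R : Type*) [Ring R] :
    IsCSNCRing R ↔ ∀ a : R, IsCleanElem a → IsNilpotent (a - a ^ 2) := by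
  constructor
  · intro h a ha
    obtain ⟨e, q, he, hq, hc, rfl⟩ := h a ha
    have hqe : Commute q e := hc.symm
    have hid : (e + q) - (e + q) ^ 2 = q * (1 - e - e - q) := by
      have h3 : e * e = e := he
      rw [sq, add_mul, mul_add, mul_add, h3, mul_sub, mul_sub, mul_sub, mul_one, ← hc]
      abel
    rw [hid]
    exact Commute.isNilpotent_mul_right
      ((((Commute.one_right q).sub_right hqe).sub_right hqe).sub_right (Commute.refl q)) hq
  · intro h a ha
    exact isStronglyNilCleanElem_of_isNilpotent_sub_sq a (h a ha)
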